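/- For n ≥ 1, the real symplectic group Sp(2n,ℝ) := {g ∈ GL_{2n}(ℝ) : gᵀ J g = J}, regarded as a subgroup of GL_{2n}(ℂ) (its elements preserve the Hermitian form h), acts transitively on the set D⁺ = {[z] ∈ ℙ(ℂ^{2n}) : h(z,z) > 0} of h-positive lines, and acts transitively on the set D⁻ = {[z] ∈ ℙ(ℂ^{2n}) : h(z,z) < 0} of h-negative lines. -/

import Mathlib

open Matrix
open scoped ComplexOrder

noncomputable section

/-- The complex matrix `J = [[0, -I], [I, 0]]` on `ℂ^{2n} = ℂ^n ⊕ ℂ^n`. -/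
def Jmat (n : ℕ) : Matrix (Fin n ⊕ Fin n) (Fin n ⊕ Fin n) ℂ :=
  Matrix.fromBlocks (0 : Matrix (Fin n) (Fin n) ℂ) (-1) 1 0

/-- The real matrix `J = [[0, -I], [I, 0]]` on `ℝ^{2n} = ℝ^n ⊕ ℝ^n`. -/
def JmatR (n : ℕ) : Matrix (Fin n ⊕ Fin n) (Fin n ⊕ Fin n) ℝ :=
  Matrix.fromBlocks (0 : Matrix (Fin n) (Fin n) ℝ) (-1) 1 0

/-- The Hermitian form `h(z, w) = (i/2) z̄ᵀ J w` of signature `(n, n)` on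
`ℂ^{2n}`. -/
def hform (n : ℕ) (z w : Fin n ⊕ Fin n → ℂ) : ℂ :=
  (Complex.I / 2) * (star z ⬝ᵥ (Jmat n *ᵥ w))

/-- The real symplectic group `Sp(2n, ℝ) = {g ∈ GL(2n, ℝ) : gᵀ J g = J}`. -/
def SpR (n : ℕ) : Set (Matrix (Fin n ⊕ Fin n) (Fin n ⊕ Fin n) ℝ) :=
  {g | g.det ≠ 0 ∧ gᵀ * JmatR n * g = JmatR n}

/-- The set `D⁺` of `h`-positive lines in `ℙ(ℂ^{2n})`. -/
def Dpos (n : ℕ) : Set (Projectivization ℂ (Fin n ⊕ Fin n → ℂ)) :=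
  {x | ∃ (z : Fin n ⊕ Fin n → ℂ) (hz : z ≠ 0),
    0 < hform n z z ∧ Projectivization.mk ℂ z hz = x}

/-- The set `D⁻` of `h`-negative lines in `ℙ(ℂ^{2n})`. -/
def Dneg (n : ℕ) : Set (Projectivization ℂ (Fin n ⊕ Fin n → ℂ)) :=
  {x | ∃ (z : Fin n ⊕ Fin n → ℂ) (hz : z ≠ 0),
    hform n z z < 0 ∧ Projectivization.mk ℂ z hz = x}

/-- Two points of `ℙ(ℂ^{2n})` lie in the same `Sp(2n,ℝ)`-orbit, where a real
symplectic matrix acts on `ℂ^{2n}` via its complexification. -/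
def SameOrbitSp (n : ℕ) (x y : Projectivization ℂ (Fin n ⊕ Fin n → ℂ)) : Prop :=
  ∃ g ∈ SpR n, ∃ (z : Fin n ⊕ Fin n → ℂ) (hz : z ≠ 0)
    (hgz : (g.map Complex.ofReal) *ᵥ z ≠ 0),
      Projectivization.mk ℂ z hz = x ∧
        Projectivization.mk ℂ ((g.map Complex.ofReal) *ᵥ z) hgz = y

namespace SpAux

variable {n : ℕ}

abbrev V (n : ℕ) := Fin n ⊕ Fin n → ℝ

/-- The real symplectic form. -/
def om (n : ℕ) (x y : V n) : ℝ := x ⬝ᵥ (JmatR n *ᵥ y)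

lemma JmatR_eq (n : ℕ) : JmatR n = Matrix.J (Fin n) ℝ := rfl

lemma mem_SpR_iff {g : Matrix (Fin n ⊕ Fin n) (Fin n ⊕ Fin n) ℝ} :
    g ∈ SpR n ↔ g ∈ Matrix.symplecticGroup (Fin n) ℝ := by
  constructor
  · rintro ⟨-, h⟩
    exact SymplecticGroup.mem_iff'.mpr (by rw [← JmatR_eq]; exact h)
  · intro h
    exact ⟨(SymplecticGroup.symplectic_det h).ne_zero,
      by rw [JmatR_eq]; exact SymplecticGroup.mem_iff'.mp h⟩

lemma SpR_one : (1 : Matrix (Fin n ⊕ Fin n) (Fin n ⊕ Fin n) ℝ) ∈ SpR n :=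
  mem_SpR_iff.mpr (one_mem _)

lemma SpR_mul {g h : Matrix (Fin n ⊕ Fin n) (Fin n ⊕ Fin n) ℝ}
    (hg : g ∈ SpR n) (hh : h ∈ SpR n) : g * h ∈ SpR n :=
  mem_SpR_iff.mpr (mul_mem (mem_SpR_iff.mp hg) (mem_SpR_iff.mp hh))

lemma SpR_inv {g : Matrix (Fin n ⊕ Fin n) (Fin n ⊕ Fin n) ℝ}
    (hg : g ∈ SpR n) : g⁻¹ ∈ SpR n := by
  rw [mem_SpR_iff] at hg ⊢
  have h := ((⟨g, hg⟩ : Matrix.symplecticGroup (Fin n) ℝ)⁻¹).2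
  rwa [SymplecticGroup.coe_inv'] at h

lemma om_antisymm (x y : V n) : om n x y = - om n y x := by
  unfold om
  rw [Matrix.dotProduct_mulVec]
  have hJ : JmatR n = -((JmatR n)ᵀ) := by
    rw [JmatR_eq, Matrix.J_transpose, neg_neg]
  calc x ᵥ* JmatR n ⬝ᵥ y = x ᵥ* (-((JmatR n)ᵀ)) ⬝ᵥ y := by rw [← hJ]
    _ = -((x ᵥ* (JmatR n)ᵀ) ⬝ᵥ y) := by rw [Matrix.vecMul_neg, neg_dotProduct]
    _ = -((JmatR n *ᵥ x) ⬝ᵥ y) := by rw [Matrix.vecMul_transpose]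
    _ = -(y ⬝ᵥ (JmatR n *ᵥ x)) := by rw [dotProduct_comm]

lemma om_self (x : V n) : om n x x = 0 := by
  have h := om_antisymm x x; linarith

lemma om_add_right (x y z : V n) : om n x (y + z) = om n x y + om n x z := by
  simp [om, Matrix.mulVec_add, dotProduct_add]

lemma om_sub_right (x y z : V n) : om n x (y - z) = om n x y - om n x z := by
  simp [om, Matrix.mulVec_sub, dotProduct_sub]

lemma om_smul_left (c : ℝ) (x y : V n) : om n (c • x) y = c * om n x y := by
  simp [om, smul_dotProduct]

lemma om_smul_right (c : ℝ) (x y : V n) : om n x (c • y) = c * om n x y := by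
  simp [om, Matrix.mulVec_smul, dotProduct_smul]

lemma om_zero_left (y : V n) : om n 0 y = 0 := by simp [om]

lemma om_add_left (x y z : V n) : om n (x + y) z = om n x z + om n y z := by
  simp [om, add_dotProduct]

lemma om_invariant {g : Matrix (Fin n ⊕ Fin n) (Fin n ⊕ Fin n) ℝ}
    (hg : g ∈ SpR n) (x y : V n) : om n (g *ᵥ x) (g *ᵥ y) = om n x y := by
  have hstep : g *ᵥ x = x ᵥ* gᵀ := by rw [Matrix.vecMul_transpose]
  calc om n (g *ᵥ x) (g *ᵥ y)
      = (x ᵥ* gᵀ) ⬝ᵥ ((JmatR n * g) *ᵥ y) := by rw [om, hstep, Matrix.mulVec_mulVec]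
    _ = ((x ᵥ* gᵀ) ᵥ* (JmatR n * g)) ⬝ᵥ y := by rw [Matrix.dotProduct_mulVec]
    _ = (x ᵥ* (gᵀ * (JmatR n * g))) ⬝ᵥ y := by rw [Matrix.vecMul_vecMul]
    _ = (x ᵥ* JmatR n) ⬝ᵥ y := by rw [← Matrix.mul_assoc, hg.2]
    _ = om n x y := by rw [om, Matrix.dotProduct_mulVec]

/-- A symplectic transvection. -/
def T (n : ℕ) (u : V n) (l : ℝ) : Matrix (Fin n ⊕ Fin n) (Fin n ⊕ Fin n) ℝ :=
  1 + l • Matrix.vecMulVec u (JmatR n *ᵥ u)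

lemma vecMulVec_mulVec' (u w v : V n) :
    Matrix.vecMulVec u w *ᵥ v = (w ⬝ᵥ v) • u := by
  ext i
  simp only [Matrix.mulVec, dotProduct, Matrix.vecMulVec_apply, Pi.smul_apply,
    smul_eq_mul, Finset.sum_mul]
  refine Finset.sum_congr rfl fun j _ => by ring

lemma T_mulVec (u : V n) (l : ℝ) (v : V n) :
    T n u l *ᵥ v = v + (l * om n v u) • u := by
  rw [T, Matrix.add_mulVec, Matrix.one_mulVec, Matrix.smul_mulVec,
    vecMulVec_mulVec']
  congr 1
  rw [smul_smul]
  congr 1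
  rw [dotProduct_comm]
  rfl

lemma mul_vecMulVec (M : Matrix (Fin n ⊕ Fin n) (Fin n ⊕ Fin n) ℝ) (u w : V n) :
    M * Matrix.vecMulVec u w = Matrix.vecMulVec (M *ᵥ u) w := by
  ext i j
  simp only [Matrix.mul_apply, Matrix.vecMulVec_apply, Matrix.mulVec, dotProduct,
    Finset.sum_mul]
  refine Finset.sum_congr rfl fun k _ => by ring

lemma vecMulVec_mul (M : Matrix (Fin n ⊕ Fin n) (Fin n ⊕ Fin n) ℝ) (u w : V n) :
    Matrix.vecMulVec u w * M = Matrix.vecMulVec u (w ᵥ* M) := by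
  ext i j
  simp only [Matrix.mul_apply, Matrix.vecMulVec_apply, Matrix.vecMul, dotProduct,
    Finset.mul_sum]
  refine Finset.sum_congr rfl fun k _ => by ring

lemma vecMulVec_transpose' (u w : V n) :
    (Matrix.vecMulVec u w)ᵀ = Matrix.vecMulVec w u := by
  ext i j
  simp [Matrix.vecMulVec_apply, mul_comm]

lemma T_mem (u : V n) (l : ℝ) : T n u l ∈ SpR n := by
  set U := Matrix.vecMulVec u (JmatR n *ᵥ u) with hU
  set w := JmatR n *ᵥ u with hw
  set W := Matrix.vecMulVec w w with hW
  have hJT : (JmatR n)ᵀ = -JmatR n := by rw [JmatR_eq, Matrix.J_transpose]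
  have hwu : w ⬝ᵥ u = 0 := by
    rw [hw, dotProduct_comm]; exact om_self u
  have hUT : Uᵀ = Matrix.vecMulVec w u := by
    rw [hU, vecMulVec_transpose', hw]
  have h1 : JmatR n * U = W := by
    rw [hU, mul_vecMulVec, hW, hw]
  have h2 : Uᵀ * JmatR n = -W := by
    rw [hUT, vecMulVec_mul]
    have huJ : u ᵥ* JmatR n = -w := by
      rw [← Matrix.mulVec_transpose, hJT, Matrix.neg_mulVec, hw]
    rw [huJ, hW]
    ext i j; simp [Matrix.vecMulVec_apply]
  have h3 : Uᵀ * JmatR n * U = 0 := by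
    rw [h2, Matrix.neg_mul, hW, hU, mul_vecMulVec, vecMulVec_mulVec', hwu, zero_smul]
    ext i j; simp [Matrix.vecMulVec_apply]
  have hTT : (T n u l)ᵀ = 1 + l • Uᵀ := by
    rw [show T n u l = 1 + l • U from rfl, Matrix.transpose_add, Matrix.transpose_one,
      Matrix.transpose_smul]
  have key : (T n u l)ᵀ * JmatR n * T n u l = JmatR n := by
    rw [hTT, show T n u l = 1 + l • U from rfl]
    have e1 : (1 + l • Uᵀ) * JmatR n = JmatR n + l • (Uᵀ * JmatR n) := by
      rw [Matrix.add_mul, Matrix.one_mul, Matrix.smul_mul]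
    have e2 : (JmatR n + l • (Uᵀ * JmatR n)) * (1 + l • U) =
        JmatR n + l • (JmatR n * U) + l • (Uᵀ * JmatR n) +
          l • (l • (Uᵀ * JmatR n * U)) := by
      rw [Matrix.add_mul, Matrix.mul_add, Matrix.mul_one, Matrix.mul_smul,
        Matrix.smul_mul, Matrix.mul_add, Matrix.mul_one, Matrix.mul_smul, smul_add,
        smul_smul, ← smul_smul]
      abel
    rw [e1, e2, h3, h1, h2]
    simp
  refine ⟨?_, key⟩
  intro h0
  have hdet := congrArg Matrix.det key
  rw [Matrix.det_mul, Matrix.det_mul, Matrix.det_transpose, h0] at hdet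
  simp only [mul_zero, zero_mul] at hdet
  exact (Matrix.isUnit_det_J (Fin n) ℝ).ne_zero (by rw [JmatR_eq] at hdet; exact hdet.symm)

/-- The basic move: a transvection sending `a` to `b`, fixing the
`om`-orthogonal complement of `b - a`. -/
lemma move (a b : V n) (h : om n a b ≠ 0) :
    ∃ g ∈ SpR n, g *ᵥ a = b ∧ ∀ v, om n v (b - a) = 0 → g *ᵥ v = v := by
  refine ⟨T n (b - a) (om n a b)⁻¹, T_mem _ _, ?_, ?_⟩
  · rw [T_mulVec]
    have : om n a (b - a) = om n a b := by
      rw [om_sub_right, om_self, sub_zero]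
    rw [this, inv_mul_cancel₀ h, one_smul]
    abel
  · intro v hv
    rw [T_mulVec, hv, mul_zero, zero_smul, add_zero]

lemma exists_move_vec (x x' : V n) (hx : x ≠ 0) (hx' : x' ≠ 0) :
    ∃ g ∈ SpR n, g *ᵥ x = x' := by
  by_cases h : om n x x' ≠ 0
  · obtain ⟨g, hg, hgx, -⟩ := move x x' h
    exact ⟨g, hg, hgx⟩
  · push_neg at h
    -- find c with om x c ≠ 0 and om c x' ≠ 0
    have omJ : ∀ y : V n, om n y (-(JmatR n *ᵥ y)) = y ⬝ᵥ y := by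
      intro y
      unfold om
      rw [Matrix.mulVec_neg, Matrix.mulVec_mulVec]
      have : JmatR n * JmatR n = -1 := by rw [JmatR_eq]; exact Matrix.J_squared (Fin n) ℝ
      rw [this, Matrix.neg_mulVec, Matrix.one_mulVec, neg_neg]
    have hxx : x ⬝ᵥ x ≠ 0 := by
      intro h0
      exact hx ((dotProduct_self_eq_zero).mp h0)
    have hxx' : x' ⬝ᵥ x' ≠ 0 := by
      intro h0
      exact hx' ((dotProduct_self_eq_zero).mp h0)
    set c₁ := -(JmatR n *ᵥ x) with hc₁
    set c₂ := -(JmatR n *ᵥ x') with hc₂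
    have h1 : om n x c₁ ≠ 0 := by rw [hc₁, omJ]; exact hxx
    have h2 : om n c₂ x' ≠ 0 := by
      rw [om_antisymm, hc₂, omJ]
      simpa using hxx'
    obtain ⟨c, hca, hcb⟩ : ∃ c : V n, om n x c ≠ 0 ∧ om n c x' ≠ 0 := by
      by_cases ha : om n x c₂ ≠ 0
      · exact ⟨c₂, ha, h2⟩
      by_cases hb : om n c₁ x' ≠ 0
      · exact ⟨c₁, h1, hb⟩
      push_neg at ha hb
      refine ⟨c₁ + c₂, ?_, ?_⟩
      · rw [om_add_right, ha, add_zero]; exact h1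
      · rw [om_add_left, hb, zero_add]; exact h2
    obtain ⟨g₁, hg₁, hg₁x, -⟩ := move x c hca
    obtain ⟨g₂, hg₂, hg₂c, -⟩ := move c x' hcb
    refine ⟨g₂ * g₁, SpR_mul hg₂ hg₁, ?_⟩
    rw [← Matrix.mulVec_mulVec, hg₁x, hg₂c]

lemma fix_move (c : ℝ) (hc : c ≠ 0) (x' ya yb : V n)
    (ha : om n x' ya = c) (hb : om n x' yb = c) :
    ∃ g ∈ SpR n, g *ᵥ x' = x' ∧ g *ᵥ ya = yb := by
  by_cases h : om n ya yb ≠ 0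
  · obtain ⟨g, hg, hgy, hfix⟩ := move ya yb h
    refine ⟨g, hg, hfix x' ?_, hgy⟩
    rw [om_sub_right, ha, hb, sub_self]
  · push_neg at h
    set m := x' + yb with hm
    have h1 : om n ya m ≠ 0 := by
      rw [hm, om_add_right, h, add_zero, om_antisymm, ha]
      simpa using hc
    have h2 : om n m yb ≠ 0 := by
      rw [hm]
      rw [om_add_left, om_self, add_zero, hb]
      exact hc
    obtain ⟨g₁, hg₁, hg₁y, hfix₁⟩ := move ya m h1
    obtain ⟨g₂, hg₂, hg₂m, hfix₂⟩ := move m yb h2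
    have hx1 : g₁ *ᵥ x' = x' := by
      apply hfix₁
      rw [om_sub_right, hm, om_add_right, om_self, zero_add, hb, ha, sub_self]
    have hx2 : g₂ *ᵥ x' = x' := by
      apply hfix₂
      rw [om_sub_right, hm, om_add_right, om_self, zero_add, hb, sub_self]
    refine ⟨g₂ * g₁, SpR_mul hg₂ hg₁, ?_, ?_⟩
    · rw [← Matrix.mulVec_mulVec, hx1, hx2]
    · rw [← Matrix.mulVec_mulVec, hg₁y, hg₂m]

lemma exists_move_pair (c : ℝ) (hc : c ≠ 0) (x y x' y' : V n)
    (h1 : om n x y = c) (h2 : om n x' y' = c) :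
    ∃ g ∈ SpR n, g *ᵥ x = x' ∧ g *ᵥ y = y' := by
  have hx : x ≠ 0 := by
    rintro rfl
    rw [om_zero_left] at h1
    exact hc h1.symm
  have hx' : x' ≠ 0 := by
    rintro rfl
    rw [om_zero_left] at h2
    exact hc h2.symm
  obtain ⟨g₁, hg₁, hg₁x⟩ := exists_move_vec x x' hx hx'
  have hinv : om n x' (g₁ *ᵥ y) = c := by
    rw [← hg₁x, om_invariant hg₁, h1]
  obtain ⟨g₂, hg₂, hg₂x, hg₂y⟩ := fix_move c hc x' (g₁ *ᵥ y) y' hinv h2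
  refine ⟨g₂ * g₁, SpR_mul hg₂ hg₁, ?_, ?_⟩
  · rw [← Matrix.mulVec_mulVec, hg₁x, hg₂x]
  · rw [← Matrix.mulVec_mulVec, hg₂y]


abbrev VC (n : ℕ) := Fin n ⊕ Fin n → ℂ

def Cv (a : V n) : VC n := fun i => (a i : ℂ)

def zc (a b : V n) : VC n := Cv a + Complex.I • Cv b

lemma Cv_mulVec (g : Matrix (Fin n ⊕ Fin n) (Fin n ⊕ Fin n) ℝ) (a : V n) :
    (g.map Complex.ofReal) *ᵥ Cv a = Cv (g *ᵥ a) := by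
  ext i
  simp [Cv, Matrix.mulVec, dotProduct, Matrix.map_apply]

lemma map_mulVec_zc (g : Matrix (Fin n ⊕ Fin n) (Fin n ⊕ Fin n) ℝ) (a b : V n) :
    (g.map Complex.ofReal) *ᵥ zc a b = zc (g *ᵥ a) (g *ᵥ b) := by
  rw [zc, Matrix.mulVec_add, Matrix.mulVec_smul, Cv_mulVec, Cv_mulVec, zc]

lemma Cv_dot (a b : V n) : Cv a ⬝ᵥ Cv b = ((a ⬝ᵥ b : ℝ) : ℂ) := by
  simp [Cv, dotProduct]

lemma star_zc (a b : V n) : star (zc a b) = zc a (-b) := by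
  ext i
  simp [zc, Cv, smul_eq_mul, Complex.ext_iff, Complex.star_def]

lemma zc_eq_self (z : VC n) : zc (fun i => (z i).re) (fun i => (z i).im) = z := by
  ext i
  simp [zc, Cv, smul_eq_mul]
  rw [mul_comm, Complex.re_add_im]

lemma zc_smul (l : ℝ) (a b : V n) : zc (l • a) (l • b) = (l : ℂ) • zc a b := by
  ext i
  simp only [Pi.add_apply, Pi.smul_apply, zc, Cv, smul_eq_mul, Complex.ofReal_mul]
  ring

lemma Jmat_map (n : ℕ) : Jmat n = (JmatR n).map Complex.ofReal := by
  ext i j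
  rcases i with i | i <;> rcases j with j | j <;>
    simp [Jmat, JmatR, Matrix.map_apply, Matrix.one_apply, apply_ite]

lemma hform_eq (z : VC n) :
    hform n z z = ((om n (fun i => (z i).im) (fun i => (z i).re) : ℝ) : ℂ) := by
  set a := fun i => (z i).re with ha
  set b := fun i => (z i).im with hb
  have hz : z = zc a b := (zc_eq_self z).symm
  set wa := JmatR n *ᵥ a with hwa
  set wb := JmatR n *ᵥ b with hwb
  have hJ : Jmat n *ᵥ z = zc wa wb := by
    rw [hz, Jmat_map, map_mulVec_zc]
  have hstar : star z = zc a (-b) := by rw [hz, star_zc]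
  have e : zc a (-b) ⬝ᵥ zc wa wb =
      (Cv a ⬝ᵥ Cv wa) + Complex.I * (Cv a ⬝ᵥ Cv wb) +
        (Complex.I * (Cv (-b) ⬝ᵥ Cv wa) + Complex.I * (Complex.I * (Cv (-b) ⬝ᵥ Cv wb))) := by
    rw [zc, zc, add_dotProduct, dotProduct_add, dotProduct_add,
      smul_dotProduct, smul_dotProduct, dotProduct_smul,
      dotProduct_smul]
    simp only [smul_eq_mul]
    try ring
  have d1 : Cv a ⬝ᵥ Cv wa = ((om n a a : ℝ) : ℂ) := Cv_dot a wa
  have d2 : Cv a ⬝ᵥ Cv wb = ((om n a b : ℝ) : ℂ) := Cv_dot a wb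
  have d3 : Cv (-b) ⬝ᵥ Cv wa = ((-om n b a : ℝ) : ℂ) := by
    rw [Cv_dot]
    congr 1
    rw [neg_dotProduct]
    rfl
  have d4 : Cv (-b) ⬝ᵥ Cv wb = ((-om n b b : ℝ) : ℂ) := by
    rw [Cv_dot]
    congr 1
    rw [neg_dotProduct]
    rfl
  rw [hform, hstar, hJ, e, d1, d2, d3, d4, om_self, om_self, om_antisymm a b]
  have hI := Complex.I_mul_I
  push_cast
  linear_combination (-(om n b a : ℂ)) * hI

/-- Reaching a standard base line from a line with prescribed sign. -/
lemma reach (z : VC n) (a' b' : V n) (s : ℝ) (hs : 0 < s)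
    (habs : om n a' b' ≠ 0)
    (hom : om n (fun i => (z i).re) (fun i => (z i).im) = s * om n a' b') :
    ∃ g ∈ SpR n, ∃ μ : ℂ, μ ≠ 0 ∧ (g.map Complex.ofReal) *ᵥ z = μ • zc a' b' := by
  set a := fun i => (z i).re with ha
  set b := fun i => (z i).im with hb
  set l := (Real.sqrt s)⁻¹ with hl
  have hsqrt : Real.sqrt s ≠ 0 := by positivity
  have hl0 : l ≠ 0 := inv_ne_zero hsqrt
  have hls : l * l * s = 1 := by
    rw [hl]
    field_simp
    rw [Real.sq_sqrt hs.le]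
  have h1 : om n (l • a) (l • b) = om n a' b' := by
    rw [om_smul_left, om_smul_right, hom]
    linear_combination om n a' b' * hls
  obtain ⟨g, hg, hgx, hgy⟩ := exists_move_pair (om n a' b') habs (l • a) (l • b) a' b' h1 rfl
  have hz : z = zc a b := (zc_eq_self z).symm
  have key : (g.map Complex.ofReal) *ᵥ ((l : ℂ) • z) = zc a' b' := by
    rw [hz, ← zc_smul, map_mulVec_zc, hgx, hgy]
  rw [Matrix.mulVec_smul] at key
  have hlC : (l : ℂ) ≠ 0 := by exact_mod_cast hl0
  refine ⟨g, hg, (l : ℂ)⁻¹, inv_ne_zero hlC, ?_⟩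
  rw [← key, inv_smul_smul₀ hlC]

lemma orbit (zb : VC n) {x y : Projectivization ℂ (VC n)} (z w : VC n)
    (hz : z ≠ 0) (hw : w ≠ 0)
    (hx : Projectivization.mk ℂ z hz = x) (hy : Projectivization.mk ℂ w hw = y)
    (h1 : ∃ g ∈ SpR n, ∃ μ : ℂ, μ ≠ 0 ∧ (g.map Complex.ofReal) *ᵥ z = μ • zb)
    (h2 : ∃ g ∈ SpR n, ∃ μ : ℂ, μ ≠ 0 ∧ (g.map Complex.ofReal) *ᵥ w = μ • zb) :
    SameOrbitSp n x y := by
  obtain ⟨g, hg, μ, hμ, hgz⟩ := h1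
  obtain ⟨g', hg', μ', hμ', hgw⟩ := h2
  have hdet' : IsUnit g'.det := isUnit_iff_ne_zero.mpr hg'.1
  have hmapC : ∀ A B : Matrix (Fin n ⊕ Fin n) (Fin n ⊕ Fin n) ℝ,
      (A * B).map Complex.ofReal = A.map Complex.ofReal * B.map Complex.ofReal := by
    intro A B
    rw [show (Complex.ofReal : ℝ → ℂ) = ⇑Complex.ofRealHom from rfl]
    exact _root_.Matrix.map_mul
  have hone : (1 : Matrix (Fin n ⊕ Fin n) (Fin n ⊕ Fin n) ℝ).map Complex.ofReal = 1 :=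
    Matrix.map_one _ Complex.ofReal_zero Complex.ofReal_one
  have hback : (g'⁻¹.map Complex.ofReal) *ᵥ zb = μ'⁻¹ • w := by
    have h := congrArg (fun v => (g'⁻¹.map Complex.ofReal) *ᵥ v) hgw
    simp only [Matrix.mulVec_smul] at h
    rw [Matrix.mulVec_mulVec, ← hmapC, Matrix.nonsing_inv_mul g' hdet', hone,
      Matrix.one_mulVec] at h
    rw [h, inv_smul_smul₀ hμ']
  have hGmem : g'⁻¹ * g ∈ SpR n := SpR_mul (SpR_inv hg') hg
  have hGz : ((g'⁻¹ * g).map Complex.ofReal) *ᵥ z = (μ * μ'⁻¹) • w := by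
    rw [hmapC, ← Matrix.mulVec_mulVec, hgz, Matrix.mulVec_smul, hback, smul_smul]
  have hν : μ * μ'⁻¹ ≠ 0 := mul_ne_zero hμ (inv_ne_zero hμ')
  have hGz0 : ((g'⁻¹ * g).map Complex.ofReal) *ᵥ z ≠ 0 := by
    rw [hGz]; exact smul_ne_zero hν hw
  refine ⟨g'⁻¹ * g, hGmem, z, hz, hGz0, hx, ?_⟩
  rw [← hy]
  apply (Projectivization.mk_eq_mk_iff ℂ _ _ _ _).mpr
  refine ⟨Units.mk0 _ hν, ?_⟩
  rw [hGz]
  rfl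

lemma om_single (hn : 1 ≤ n) :
    om n (Pi.single (Sum.inl (⟨0, hn⟩ : Fin n)) (1:ℝ)) (Pi.single (Sum.inr ⟨0, hn⟩) 1)
      = -1 := by
  rw [om, Matrix.mulVec_single, single_dotProduct]
  simp [JmatR, Matrix.one_apply]

end SpAux


/-- For `n ≥ 1`, the real symplectic group `Sp(2n,ℝ)`, viewed inside
`GL(2n,ℂ)`, acts transitively on the set `D⁺` of `h`-positive lines and
transitively on the set `D⁻` of `h`-negative lines. -/
theorem SpR_transitive_on_Dpos_Dneg (n : ℕ) (hn : 1 ≤ n) :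
    (∀ x y, x ∈ Dpos n → y ∈ Dpos n → SameOrbitSp n x y) ∧
      ∀ x y, x ∈ Dneg n → y ∈ Dneg n → SameOrbitSp n x y := by
  classical
  set e0 : Fin n := ⟨0, hn⟩ with he0
  set xp : SpAux.V n := Pi.single (Sum.inl e0) (1:ℝ) with hxp
  set yp : SpAux.V n := Pi.single (Sum.inr e0) (1:ℝ) with hyp
  have hxy : SpAux.om n xp yp = -1 := SpAux.om_single hn
  have hyx : SpAux.om n yp xp = 1 := by
    rw [SpAux.om_antisymm, hxy]; norm_num
  constructor
  · rintro x y ⟨z, hz, hzpos, hmkx⟩ ⟨w, hw, hwpos, hmky⟩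
    have hconv : ∀ (v : SpAux.VC n), v ≠ 0 → 0 < hform n v v →
        ∃ g ∈ SpR n, ∃ μ : ℂ, μ ≠ 0 ∧
          (g.map Complex.ofReal) *ᵥ v = μ • SpAux.zc xp yp := by
      intro v hv hpos
      rw [SpAux.hform_eq] at hpos
      have hs : 0 < SpAux.om n (fun i => (v i).im) (fun i => (v i).re) :=
        Complex.zero_lt_real.mp hpos
      refine SpAux.reach v xp yp _ hs (by rw [hxy]; norm_num) ?_
      rw [hxy, SpAux.om_antisymm]
      ring
    exact SpAux.orbit (SpAux.zc xp yp) z w hz hw hmkx hmky (hconv z hz hzpos)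
      (hconv w hw hwpos)
  · rintro x y ⟨z, hz, hzneg, hmkx⟩ ⟨w, hw, hwneg, hmky⟩
    have hconv : ∀ (v : SpAux.VC n), v ≠ 0 → hform n v v < 0 →
        ∃ g ∈ SpR n, ∃ μ : ℂ, μ ≠ 0 ∧
          (g.map Complex.ofReal) *ᵥ v = μ • SpAux.zc yp xp := by
      intro v hv hneg
      rw [SpAux.hform_eq] at hneg
      have hs : SpAux.om n (fun i => (v i).im) (fun i => (v i).re) < 0 := by
        exact_mod_cast hneg
      refine SpAux.reach v yp xp
        (-(SpAux.om n (fun i => (v i).im) (fun i => (v i).re))) (by linarith)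
        (by rw [hyx]; norm_num) ?_
      rw [hyx, SpAux.om_antisymm]
      ring
    exact SpAux.orbit (SpAux.zc yp xp) z w hz hw hmkx hmky (hconv z hz hzneg)
      (hconv w hw hwneg)

end
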